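/- The two explicit operators 𝒴 and 𝒴′ on the Laurent polynomial ring F[U,U^{−1}] are mutually inverse: 𝒴 ∘ 𝒴′ = id and 𝒴′ ∘ 𝒴 = id as F-linear endomorphisms of F[U,U^{−1}]. -/

import Mathlib

/- STATEMENT 3: The two explicit operators 𝒴 and 𝒴′ on the Laurent polynomial ring
F[U,U⁻¹] (given on the monomial basis by
𝒴(U^k) = t₁U^{k−1} − a_k(U^{k−1} + U^{−k}) and
𝒴′(U^k) = t₁U^{k+1} − a_{−k}(U^{k+1} + U^{−k}) + t̄₁U^{−k},
where a_k = (t̄₁ − t̄₂ q^{2k−1})/(1 − q^{4k−2}))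
are mutually inverse: 𝒴 ∘ 𝒴′ = id and 𝒴′ ∘ 𝒴 = id as F-linear endomorphisms. -/

noncomputable section

open LaurentPolynomial

/-- The field `F = ℚ(q, t₁, t₂)` of rational functions in three indeterminates. -/
abbrev F : Type := FractionRing (MvPolynomial (Fin 3) ℚ)

def q : F := algebraMap (MvPolynomial (Fin 3) ℚ) F (MvPolynomial.X 0)
def t1 : F := algebraMap (MvPolynomial (Fin 3) ℚ) F (MvPolynomial.X 1)
def t2 : F := algebraMap (MvPolynomial (Fin 3) ℚ) F (MvPolynomial.X 2)

/-- `a_k = (t̄₁ − t̄₂ q^{2k−1})/(1 − q^{4k−2})`. -/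
def aop (k : ℤ) : F :=
  ((t1 - t1⁻¹) - (t2 - t2⁻¹) * q ^ (2 * k - 1)) / (1 - q ^ (4 * k - 2))

/-! ### Auxiliary lemmas -/

lemma t1_ne : t1 ≠ 0 := by
  simp [t1, map_ne_zero_iff _ (IsFractionRing.injective (MvPolynomial (Fin 3) ℚ) F),
    MvPolynomial.X_ne_zero]

lemma q_ne : q ≠ 0 := by
  simp [q, map_ne_zero_iff _ (IsFractionRing.injective (MvPolynomial (Fin 3) ℚ) F),
    MvPolynomial.X_ne_zero]

lemma q_pow_ne_one (n : ℕ) (hn : n ≠ 0) : q ^ n ≠ 1 := by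
  intro h
  have h2 : (MvPolynomial.X 0 : MvPolynomial (Fin 3) ℚ) ^ n = 1 := by
    apply IsFractionRing.injective (MvPolynomial (Fin 3) ℚ) F
    rw [map_pow, map_one]; exact h
  have := congrArg (MvPolynomial.eval (fun _ => (2:ℚ))) h2
  simp at this
  have : (1:ℚ) < 2 ^ n := one_lt_pow₀ (by norm_num) hn
  simp_all

lemma q_zpow_ne_one (m : ℤ) (hm : m ≠ 0) : q ^ m ≠ 1 := by
  intro h
  rcases lt_or_gt_of_ne hm with hneg | hpos
  · have h' : q ^ (-m) = 1 := by rw [zpow_neg, h, inv_one]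
    have hmn : (-m).toNat ≠ 0 := by omega
    exact q_pow_ne_one _ hmn (by rw [← zpow_natCast, Int.toNat_of_nonneg (by omega)]; exact h')
  · exact q_pow_ne_one m.toNat (by omega)
      (by rw [← zpow_natCast, Int.toNat_of_nonneg (by omega)]; exact h)

lemma aux_field (a b Q : F) (hQ : Q ≠ 0) (hQ2 : Q * Q ≠ 1) :
    (a - b * Q) / (1 - Q * Q) + (a - b * Q⁻¹) / (1 - (Q * Q)⁻¹) = a := by
  have hden : 1 - Q * Q ≠ 0 := sub_ne_zero.mpr fun h => hQ2 h.symm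
  have hden' : 1 - (Q * Q)⁻¹ ≠ 0 := by
    rw [sub_ne_zero]; intro h
    exact hQ2 (by rw [← inv_inv (Q * Q), ← h, inv_one])
  have h2 : (a - b * Q⁻¹) / (1 - (Q * Q)⁻¹) = (a * (Q * Q) - b * Q) / (Q * Q - 1) := by
    rw [div_eq_div_iff hden' (by rw [sub_ne_zero]; exact hQ2)]
    field_simp
  rw [h2, div_add_div _ _ hden (by rw [sub_ne_zero]; exact hQ2),
    div_eq_iff (mul_ne_zero hden (by rw [sub_ne_zero]; exact hQ2))]
  ring

/-- The key identity `a_k + a_{1-k} = t̄₁`. -/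
lemma aop_key (k : ℤ) : aop k + aop (1 - k) = t1 - t1⁻¹ := by
  rw [aop, aop,
    show (2 * (1 - k) - 1 : ℤ) = -(2 * k - 1) by ring,
    show (4 * (1 - k) - 2 : ℤ) = -((2 * k - 1) + (2 * k - 1)) by ring,
    show (4 * k - 2 : ℤ) = (2 * k - 1) + (2 * k - 1) by ring,
    zpow_neg, zpow_neg, zpow_add₀ q_ne]
  exact aux_field _ _ _ (zpow_ne_zero _ q_ne)
    (by rw [← zpow_add₀ q_ne]; exact q_zpow_ne_one _ (by omega))

lemma gen1 {K M : Type*} [Field K] [AddCommGroup M] [Module K M]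
    (t s A : K) (v w : M) (ht : t * s = 1) :
    t • (t • v - A • (v + w)) -
        (t - s - A) • (t • v - A • (v + w) + (t • w - (t - s - A) • (w + v))) +
      (t - s) • (t • w - (t - s - A) • (w + v)) = v := by
  match_scalars <;> first | ring1 | linear_combination ht

lemma gen2 {K M : Type*} [Field K] [AddCommGroup M] [Module K M]
    (t s C : K) (v w : M) (ht : t * s = 1) :
    t • (t • v - (t - s - C) • (v + w) + (t - s) • w) -
      C • (t • v - (t - s - C) • (v + w) + (t - s) • w +
        (t • w - C • (w + v) + (t - s) • v)) = v := by
  match_scalars <;> first | ring1 | linear_combination ht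

set_option maxHeartbeats 1000000 in
theorem operators_mutually_inverse
    (Y Y' : LaurentPolynomial F →ₗ[F] LaurentPolynomial F)
    (hY : ∀ k : ℤ, Y (T k) = t1 • T (k - 1) - aop k • (T (k - 1) + T (-k)))
    (hY' : ∀ k : ℤ, Y' (T k) =
      t1 • T (k + 1) - aop (-k) • (T (k + 1) + T (-k)) + (t1 - t1⁻¹) • T (-k)) :
    Y.comp Y' = LinearMap.id ∧ Y'.comp Y = LinearMap.id := by
  have ht : t1 * t1⁻¹ = 1 := mul_inv_cancel₀ t1_ne
  constructor
  · refine AddMonoidAlgebra.lhom_ext' fun k => LinearMap.ext fun b => ?_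
    have hsingle : (AddMonoidAlgebra.single k b : LaurentPolynomial F) = b • T k := by
      rw [LaurentPolynomial.T, AddMonoidAlgebra.smul_single, smul_eq_mul, mul_one]
    show (Y.comp Y') (AddMonoidAlgebra.single k b) = LinearMap.id (R := F) (AddMonoidAlgebra.single k b)
    rw [hsingle, map_smul, map_smul]
    congr 1
    show Y (Y' (T k)) = T k
    have hAB : aop (-k) = (t1 - t1⁻¹) - aop (k + 1) := by
      have h := aop_key (k + 1)
      rw [show (1 - (k + 1) : ℤ) = -k by ring] at h
      linear_combination h
    rw [hY' k, map_add, map_sub, map_smul, map_smul, map_add, map_smul,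
      hY (k + 1), hY (-k),
      show (k + 1 - 1 : ℤ) = k by ring, show (-(k + 1) : ℤ) = -k - 1 by ring,
      neg_neg, hAB]
    exact gen1 t1 t1⁻¹ (aop (k + 1)) (T k) (T (-k - 1)) ht
  · refine AddMonoidAlgebra.lhom_ext' fun k => LinearMap.ext fun b => ?_
    have hsingle : (AddMonoidAlgebra.single k b : LaurentPolynomial F) = b • T k := by
      rw [LaurentPolynomial.T, AddMonoidAlgebra.smul_single, smul_eq_mul, mul_one]
    show (Y'.comp Y) (AddMonoidAlgebra.single k b) = LinearMap.id (R := F) (AddMonoidAlgebra.single k b)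
    rw [hsingle, map_smul, map_smul]
    congr 1
    show Y' (Y (T k)) = T k
    have hCD : aop (1 - k) = (t1 - t1⁻¹) - aop k := by
      linear_combination aop_key k
    rw [hY k, map_sub, map_smul, map_smul, map_add, hY' (k - 1), hY' (-k),
      show (k - 1 + 1 : ℤ) = k by ring, show (-(k - 1) : ℤ) = 1 - k by ring,
      show (-k + 1 : ℤ) = 1 - k by ring, neg_neg, hCD]
    exact gen2 t1 t1⁻¹ (aop k) (T k) (T (1 - k)) ht

end
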